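/- Let T be a finite rooted tree with vertex set V, and let x : V → ℝ be feasible. Let P = (v_0, v_1, …, v_k) be a downward path in T (v_{i+1} is a child of v_i for each i), and let ε > 0 satisfy: ε ≤ x_{v_i} for every 0 ≤ i ≤ k, and x_{v_k} − ∑_{u ∈ C(v_k)} x_u ≥ ε. Then the assignment x' defined by x'_v = x_v − ε for v on P and x'_v = x_v otherwise is feasible. -/

import Mathlib

open Finset
open scoped Classical

/-- A finite rooted tree: a distinguished root and a parent function under which
every vertex eventually reaches the root. -/
structure SBHTree (V : Type*) [Fintype V] [DecidableEq V] where
  root : V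
  parent : V → V
  parent_root : parent root = root
  reaches_root : ∀ v : V, ∃ n : ℕ, parent^[n] v = root

/-- The set of children of a vertex `v`. -/
def SBHTree.children {V : Type*} [Fintype V] [DecidableEq V]
    (T : SBHTree V) (v : V) : Finset V :=
  univ.filter (fun u => u ≠ T.root ∧ T.parent u = v)

/-- An assignment is feasible if it is non-negative and the value at each vertex is
at least the sum of the values at its children. -/
def SBHTree.Feasible {V : Type*} [Fintype V] [DecidableEq V]
    (T : SBHTree V) (x : V → ℝ) : Prop :=
  (∀ v, 0 ≤ x v) ∧ ∀ v, (∑ u ∈ T.children v, x u) ≤ x v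

lemma mem_children_iff {V : Type*} [Fintype V] [DecidableEq V]
    (T : SBHTree V) (u v : V) :
    u ∈ T.children v ↔ u ≠ T.root ∧ T.parent u = v := by
  simp [SBHTree.children]

/-- `P 0` cannot be a child of any path vertex (that would create a cycle). -/
lemma no_child_P0 {V : Type*} [Fintype V] [DecidableEq V] (T : SBHTree V)
    (k : ℕ) (P : Fin (k + 1) → V) (hPinj : Function.Injective P)
    (hPpath : ∀ i : Fin k, P i.succ ∈ T.children (P i.castSucc))
    (i : Fin (k + 1)) : P 0 ∉ T.children (P i) := by
  intro h
  rw [mem_children_iff] at h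
  obtain ⟨h0, hpar⟩ := h
  set S : Set V := {v | ∃ j : Fin (k+1), P j = v} with hS
  have hparent : ∀ j : Fin k, T.parent (P j.succ) = P j.castSucc := fun j => by
    have := (mem_children_iff T _ _).mp (hPpath j)
    exact this.2
  have hne : ∀ j : Fin k, P j.succ ≠ T.root := fun j => by
    have := (mem_children_iff T _ _).mp (hPpath j)
    exact this.1
  have hclosed : ∀ v ∈ S, T.parent v ∈ S := by
    rintro v ⟨j, rfl⟩
    rcases eq_or_ne j 0 with rfl | hj
    · exact ⟨i, hpar.symm⟩
    · obtain ⟨j', rfl⟩ := Fin.eq_succ_of_ne_zero hj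
      exact ⟨j'.castSucc, (hparent j').symm⟩
  have hiter : ∀ n : ℕ, T.parent^[n] (P 0) ∈ S := by
    intro n
    induction n with
    | zero => exact ⟨0, rfl⟩
    | succ n ih =>
      rw [Function.iterate_succ_apply']
      exact hclosed _ ih
  obtain ⟨n, hn⟩ := T.reaches_root (P 0)
  obtain ⟨j, hj⟩ := hn ▸ hiter n
  -- root = P j
  rcases eq_or_ne j 0 with rfl | hjne
  · exact h0 hj
  · obtain ⟨j', rfl⟩ := Fin.eq_succ_of_ne_zero hjne
    have : T.parent (P j'.succ) = P j'.succ := by rw [hj, T.parent_root]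
    rw [hparent j'] at this
    have := hPinj this
    exact absurd this (Fin.castSucc_lt_succ : j'.castSucc < j'.succ).ne

theorem stmt_4 {V : Type*} [Fintype V] [DecidableEq V] (T : SBHTree V)
    (x : V → ℝ) (hx : T.Feasible x)
    (k : ℕ) (P : Fin (k + 1) → V) (hPinj : Function.Injective P)
    (hPpath : ∀ i : Fin k, P i.succ ∈ T.children (P i.castSucc))
    (ε : ℝ) (hε : 0 < ε)
    (hεx : ∀ i, ε ≤ x (P i))
    (hεlast : ε ≤ x (P (Fin.last k)) - ∑ u ∈ T.children (P (Fin.last k)), x u)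
    (x' : V → ℝ)
    (hx'on : ∀ i, x' (P i) = x (P i) - ε)
    (hx'off : ∀ v, v ∉ Set.range P → x' v = x v) :
    T.Feasible x' := by
  have hle : ∀ v, x' v ≤ x v := by
    intro v
    by_cases hv : v ∈ Set.range P
    · obtain ⟨i, rfl⟩ := hv
      rw [hx'on]; linarith [hε]
    · rw [hx'off v hv]
  have hparent : ∀ j : Fin k, T.parent (P j.succ) = P j.castSucc := fun j =>
    ((mem_children_iff T _ _).mp (hPpath j)).2
  constructor
  · intro v
    by_cases hv : v ∈ Set.range P
    · obtain ⟨i, rfl⟩ := hv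
      rw [hx'on]; linarith [hεx i]
    · rw [hx'off v hv]; exact hx.1 v
  · intro v
    by_cases hv : v ∈ Set.range P
    · obtain ⟨i, rfl⟩ := hv
      by_cases hlast : i = Fin.last k
      · subst hlast
        rw [hx'on]
        calc ∑ u ∈ T.children (P (Fin.last k)), x' u
            ≤ ∑ u ∈ T.children (P (Fin.last k)), x u :=
              Finset.sum_le_sum fun u _ => hle u
          _ ≤ x (P (Fin.last k)) - ε := by linarith
      · obtain ⟨j, rfl⟩ := Fin.exists_castSucc_eq.2 hlast
        have hmem : P j.succ ∈ T.children (P j.castSucc) := hPpath j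
        have hoff : ∀ u ∈ (T.children (P j.castSucc)).erase (P j.succ), x' u = x u := by
          intro u hu
          obtain ⟨hune, humem⟩ := Finset.mem_erase.mp hu
          apply hx'off
          rintro ⟨m, rfl⟩
          rcases eq_or_ne m 0 with rfl | hm
          · exact no_child_P0 T k P hPinj hPpath j.castSucc humem
          · obtain ⟨m', rfl⟩ := Fin.eq_succ_of_ne_zero hm
            have : T.parent (P m'.succ) = P j.castSucc :=
              ((mem_children_iff T _ _).mp humem).2
            rw [hparent m'] at this
            have := hPinj this
            have : m' = j := Fin.castSucc_injective k this
            subst this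
            exact hune rfl
        rw [← Finset.add_sum_erase _ x' hmem]
        have hsum : ∑ u ∈ (T.children (P j.castSucc)).erase (P j.succ), x' u
            = ∑ u ∈ (T.children (P j.castSucc)).erase (P j.succ), x u :=
          Finset.sum_congr rfl hoff
        rw [hx'on, hx'on, hsum]
        have h2 := hx.2 (P j.castSucc)
        rw [← Finset.add_sum_erase _ x hmem] at h2
        linarith
    · rw [hx'off v hv]
      calc ∑ u ∈ T.children v, x' u ≤ ∑ u ∈ T.children v, x u :=
            Finset.sum_le_sum fun u _ => hle u
        _ ≤ x v := hx.2 v
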